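/- Let u : [-T, 0] → ℝ solve the Riccati inequality u' ≤ -u² + K₁²T⁻² with u(t) > 0 for all t and u(t) → +∞ as t → -T⁺. Then u(0) ≤ K₁ T⁻¹ coth(K₁), where the comparison solution is ū(t) = K₁T⁻¹ coth(K₁T⁻¹(t+T)). -/

import Mathlib

open Set MeasureTheory intervalIntegral

lemma tanh_hasDerivAt (x : ℝ) : HasDerivAt Real.tanh (1 - Real.tanh x ^ 2) x := by
  have hc : Real.cosh x ≠ 0 := (Real.cosh_pos x).ne'
  have h := (Real.hasDerivAt_sinh x).div (Real.hasDerivAt_cosh x) hc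
  have : (fun y => Real.sinh y / Real.cosh y) = Real.tanh := by
    funext y; rw [Real.tanh_eq_sinh_div_cosh]
  rw [show (Real.sinh / Real.cosh) = Real.tanh from this] at h
  refine h.congr_deriv ?_
  rw [Real.tanh_eq_sinh_div_cosh]
  field_simp

theorem stmt7 (T K₁ : ℝ) (hT : 0 < T) (hK : 0 < K₁)
    (u u' : ℝ → ℝ)
    (hderiv : ∀ t ∈ Set.Ioc (-T) 0, HasDerivAt u (u' t) t)
    (hineq : ∀ t ∈ Set.Ioc (-T) 0, u' t ≤ -(u t)^2 + K₁^2 / T^2)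
    (hpos : ∀ t ∈ Set.Ioc (-T) 0, 0 < u t)
    (hblow : Filter.Tendsto u (nhdsWithin (-T) (Set.Ioi (-T))) Filter.atTop) :
    u 0 ≤ K₁ / T * (Real.cosh K₁ / Real.sinh K₁) := by
  set a : ℝ := K₁ / T with ha_def
  have ha : 0 < a := div_pos hK hT
  set hb : ℝ → ℝ := fun t => Real.tanh (a * (t + T)) / a with hb_def
  set w : ℝ → ℝ := fun t => (u t)⁻¹ - hb t with w_def
  set g : ℝ → ℝ := fun t => a ^ 2 * ((u t)⁻¹ + hb t) with g_def
  set A : ℝ → ℝ := fun t => ∫ x in (0:ℝ)..t, g x with A_def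
  set P : ℝ → ℝ := fun t => w t * Real.exp (A t) with P_def
  have h0mem : (0:ℝ) ∈ Set.Ioc (-T) 0 := ⟨by linarith, le_refl 0⟩
  -- continuity of u on Ioc
  have hu_cont : ∀ t ∈ Set.Ioc (-T) 0, ContinuousAt u t := fun t ht => (hderiv t ht).continuousAt
  have hb_cont : Continuous hb := by
    have hct : Continuous Real.tanh :=
      continuous_iff_continuousAt.mpr fun x => (tanh_hasDerivAt x).differentiableAt.continuousAt
    exact (hct.comp (by continuity)).div_const a
  have hg_cont : ∀ t ∈ Set.Ioc (-T) 0, ContinuousAt g t := by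
    intro t ht
    exact continuousAt_const.mul (((hu_cont t ht).inv₀ (hpos t ht).ne') |>.add hb_cont.continuousAt)
  have hw_cont : ∀ t ∈ Set.Ioc (-T) 0, ContinuousAt w t := by
    intro t ht
    exact ((hu_cont t ht).inv₀ (hpos t ht).ne').sub hb_cont.continuousAt
  -- nonnegativity of g on Ioc
  have hg_nonneg : ∀ t ∈ Set.Ioc (-T) 0, 0 ≤ g t := by
    intro t ht
    have h1 : 0 ≤ (u t)⁻¹ := (inv_pos.mpr (hpos t ht)).le
    have h2 : 0 ≤ Real.tanh (a * (t + T)) := by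
      rw [Real.tanh_eq_sinh_div_cosh]
      exact div_nonneg (Real.sinh_nonneg_iff.mpr (by nlinarith [ht.1])) (Real.cosh_pos _).le
    have : 0 ≤ hb t := div_nonneg h2 ha.le
    positivity
  -- derivative of hb
  have hbd : ∀ s : ℝ, HasDerivAt hb (1 - Real.tanh (a * (s + T)) ^ 2) s := by
    intro s
    have h1 : HasDerivAt (fun t : ℝ => a * (t + T)) a s := by
      simpa using ((hasDerivAt_id s).add_const T).const_mul a
    have h2 := ((tanh_hasDerivAt (a * (s + T))).comp s h1).div_const a
    refine h2.congr_deriv ?_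
    rw [mul_div_assoc, div_self ha.ne', mul_one]
  have hIoo : Set.Ioo (-T) 0 ⊆ Set.Ioc (-T) 0 := Set.Ioo_subset_Ioc_self
  have hgOn : ContinuousOn g (Set.Ioc (-T) 0) := fun x hx => (hg_cont x hx).continuousWithinAt
  -- FTC: derivative of A
  have hA_deriv : ∀ s ∈ Set.Ioo (-T) 0, HasDerivAt A (g s) s := by
    intro s hs
    apply intervalIntegral.integral_hasDerivAt_right
    · apply ContinuousOn.intervalIntegrable
      apply hgOn.mono
      rw [Set.uIcc_of_ge hs.2.le]
      exact fun x hx => ⟨lt_of_lt_of_le hs.1 hx.1, hx.2⟩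
    · exact ContinuousOn.stronglyMeasurableAtFilter isOpen_Ioo (hgOn.mono hIoo) s hs
    · exact hg_cont s (hIoo hs)
  -- derivative of P and its nonnegativity
  have hP_deriv : ∀ s ∈ Set.Ioo (-T) 0,
      HasDerivAt P ((-(u' s) / (u s) ^ 2 - (1 - Real.tanh (a * (s + T)) ^ 2)) * Real.exp (A s)
        + w s * (Real.exp (A s) * g s)) s := by
    intro s hs
    have hs' := hIoo hs
    have hw' : HasDerivAt w (-(u' s) / (u s) ^ 2 - (1 - Real.tanh (a * (s + T)) ^ 2)) s :=
      ((hderiv s hs').inv (hpos s hs').ne').sub (hbd s)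
    have hAe : HasDerivAt (fun t => Real.exp (A t)) (Real.exp (A s) * g s) s :=
      (Real.hasDerivAt_exp (A s)).comp s (hA_deriv s hs)
    exact hw'.mul hAe
  have hP_nonneg : ∀ s ∈ Set.Ioo (-T) 0,
      0 ≤ (-(u' s) / (u s) ^ 2 - (1 - Real.tanh (a * (s + T)) ^ 2)) * Real.exp (A s)
        + w s * (Real.exp (A s) * g s) := by
    intro s hs
    have hs' := hIoo hs
    have hU : 0 < u s := hpos s hs'
    have ha2 : K₁ ^ 2 / T ^ 2 = a ^ 2 := by rw [ha_def, div_pow]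
    have hkey : 0 ≤ (-(u' s) / (u s) ^ 2 - (1 - Real.tanh (a * (s + T)) ^ 2)) + w s * g s := by
      have hEq : (-(u' s) / (u s) ^ 2 - (1 - Real.tanh (a * (s + T)) ^ 2)) + w s * g s
          = (-(u' s) - (u s) ^ 2 + a ^ 2) / (u s) ^ 2 := by
        simp only [w_def, g_def, hb_def]
        field_simp
        ring
      rw [hEq]
      apply div_nonneg _ (sq_nonneg _)
      have := hineq s hs'
      rw [ha2] at this
      linarith
    have he : 0 < Real.exp (A s) := Real.exp_pos _
    nlinarith [hkey, he]
  -- A is nonpositive on Ioo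
  have hA_nonpos : ∀ t ∈ Set.Ioo (-T) 0, A t ≤ 0 := by
    intro t ht
    have h1 : 0 ≤ ∫ x in t..(0:ℝ), g x := by
      apply intervalIntegral.integral_nonneg ht.2.le
      exact fun x hx => hg_nonneg x ⟨lt_of_lt_of_le ht.1 hx.1, hx.2⟩
    have h2 : A t = -∫ x in t..(0:ℝ), g x := by
      simp only [A_def]
      exact intervalIntegral.integral_symm t 0
    rw [h2]; linarith
  -- monotonicity: P t ≤ P 0
  have hmono : ∀ t ∈ Set.Ioo (-T) 0, P t ≤ P 0 := by
    intro t ht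
    have hsub : Set.Icc t 0 ⊆ Set.Ioc (-T) 0 := fun x hx => ⟨lt_of_lt_of_le ht.1 hx.1, hx.2⟩
    have hsub2 : Set.Ioo t 0 ⊆ Set.Ioo (-T) 0 := fun x hx => ⟨lt_trans ht.1 hx.1, hx.2⟩
    have hAcont : ContinuousOn A (Set.Icc t 0) := by
      have hint : MeasureTheory.IntegrableOn g (Set.uIcc 0 t) := by
        rw [Set.uIcc_of_ge ht.2.le]
        apply ContinuousOn.integrableOn_Icc
        exact hgOn.mono hsub
      have := intervalIntegral.continuousOn_primitive_interval hint
      rwa [Set.uIcc_of_ge ht.2.le] at this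
    have hcont : ContinuousOn P (Set.Icc t 0) := by
      apply ContinuousOn.mul
      · exact fun x hx => (hw_cont x (hsub hx)).continuousWithinAt
      · exact Real.continuous_exp.comp_continuousOn hAcont
    have hmon := monotoneOn_of_deriv_nonneg (convex_Icc t 0) hcont
      (fun s hs => by
        rw [interior_Icc] at hs
        exact (hP_deriv s (hsub2 hs)).differentiableAt.differentiableWithinAt)
      (fun s hs => by
        rw [interior_Icc] at hs
        rw [(hP_deriv s (hsub2 hs)).deriv]
        exact hP_nonneg s (hsub2 hs))
    exact hmon (Set.left_mem_Icc.mpr ht.2.le) (Set.right_mem_Icc.mpr ht.2.le) ht.2.le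
  -- limits at -T from the right
  have hwlim : Filter.Tendsto w (nhdsWithin (-T) (Set.Ioi (-T))) (nhds 0) := by
    have h1 : Filter.Tendsto (fun t => (u t)⁻¹) (nhdsWithin (-T) (Set.Ioi (-T))) (nhds 0) :=
      hblow.inv_tendsto_atTop
    have h2 : Filter.Tendsto hb (nhdsWithin (-T) (Set.Ioi (-T))) (nhds (hb (-T))) :=
      (hb_cont.continuousAt.tendsto).mono_left nhdsWithin_le_nhds
    have h3 : hb (-T) = 0 := by simp [hb_def]
    rw [h3] at h2
    simpa using h1.sub h2
  have hev : ∀ᶠ t in nhdsWithin (-T) (Set.Ioi (-T)), t ∈ Set.Ioo (-T) 0 := by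
    have h1 : Set.Iio (0:ℝ) ∈ nhds (-T) := Iio_mem_nhds (by linarith)
    filter_upwards [Filter.mem_inf_of_left h1, self_mem_nhdsWithin] with t h1t h2t
    exact ⟨h2t, h1t⟩
  have hPlim : Filter.Tendsto P (nhdsWithin (-T) (Set.Ioi (-T))) (nhds 0) := by
    apply squeeze_zero_norm' _ (by simpa using hwlim.norm)
    filter_upwards [hev] with t ht
    have h1 : Real.exp (A t) ≤ 1 := Real.exp_le_one_iff.mpr (hA_nonpos t ht)
    have h2 : 0 < Real.exp (A t) := Real.exp_pos _
    rw [P_def]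
    simp only [Real.norm_eq_abs, abs_mul, abs_of_pos h2]
    calc |w t| * Real.exp (A t) ≤ |w t| * 1 := by
          apply mul_le_mul_of_nonneg_left h1 (abs_nonneg _)
      _ = |w t| := mul_one _
  -- conclude 0 ≤ P 0, i.e. hb 0 ≤ (u 0)⁻¹
  have hP0 : 0 ≤ P 0 := by
    apply le_of_tendsto hPlim
    filter_upwards [hev] with t ht
    exact hmono t ht
  have hA0 : A 0 = 0 := by simp [A_def]
  have hw0 : 0 ≤ w 0 := by
    have : P 0 = w 0 := by rw [P_def]; simp [hA0]
    linarith [hP0, this.symm.le]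
  have haT : a * (0 + T) = K₁ := by
    rw [ha_def, zero_add]; field_simp
  have hb0 : hb 0 = Real.tanh K₁ / a := by
    simp only [hb_def]
    rw [haT]
  have hw0' : Real.tanh K₁ / a ≤ (u 0)⁻¹ := by
    have h := hw0
    simp only [w_def, hb0] at h
    linarith
  have htK : 0 < Real.tanh K₁ := by
    rw [Real.tanh_eq_sinh_div_cosh]
    exact div_pos (Real.sinh_pos_iff.mpr hK) (Real.cosh_pos _)
  have hu0 : 0 < u 0 := hpos 0 h0mem
  have hfin : u 0 ≤ a / Real.tanh K₁ := by
    have h1 : 0 < Real.tanh K₁ / a := div_pos htK ha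
    have h2 := inv_anti₀ h1 hw0'
    rwa [inv_inv, inv_div] at h2
  have hs : Real.sinh K₁ ≠ 0 := (Real.sinh_pos_iff.mpr hK).ne'
  have hc : Real.cosh K₁ ≠ 0 := (Real.cosh_pos K₁).ne'
  calc u 0 ≤ a / Real.tanh K₁ := hfin
    _ = a * (Real.cosh K₁ / Real.sinh K₁) := by
        rw [Real.tanh_eq_sinh_div_cosh]
        field_simp
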